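/- Let d ≥ 1, p ∈ [1,∞], ε > 0, δ ≥ 0, and consider balanced Gaussian mixture data with means μ₊, μ₋ and σ > 0, with μ = (μ₊ − μ₋)/2 ≠ 0 and μ₀ = μ/‖μ‖₂. Consider the Bayes classifier with weight w = μ₀ and bias b = −μ₀·μ̄, and assume δ·‖μ₀‖_p ≤ ε. Then the (ε,δ)-ℓp-strong-adversarial-error rate — the probability under the balanced mixture that a point is misclassified or has an (ε,δ)-ℓp-strong-adversarial example, namely (1/2)·P_{N(μ₊,σ²I_d)}({x : w·x + b ≤ 0, or there exists v with ‖v‖_p ≤ ε, |v·μ₀| ≤ δ and w·(x+v) + b ≤ 0}) + (1/2)·P_{N(μ₋,σ²I_d)}({x : w·x + b > 0, or there exists v with ‖v‖_p ≤ ε, |v·μ₀| ≤ δ and w·(x+v) + b > 0}) — equals 1 − Φ((‖μ‖₂ − δ)/σ). -/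

import Mathlib

open MeasureTheory ProbabilityTheory
open scoped ENNReal NNReal

/-- Euclidean inner product on `ℝ^d`. -/
noncomputable def dotp {d : ℕ} (w x : Fin d → ℝ) : ℝ := ∑ i, w i * x i

/-- The `ℓ₂` norm on `ℝ^d`. -/
noncomputable def l2 {d : ℕ} (w : Fin d → ℝ) : ℝ := Real.sqrt (∑ i, (w i)^2)

/-- The product Gaussian measure `N(m, σ²I_d)` on `ℝ^d`. -/
noncomputable def gaussPi {d : ℕ} (m : Fin d → ℝ) (σ : ℝ) : Measure (Fin d → ℝ) :=
  Measure.pi fun i => gaussianReal (m i) ((σ^2).toNNReal)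

/-- The standard normal cumulative distribution function `Φ`. -/
noncomputable def Phi (x : ℝ) : ℝ := ((gaussianReal 0 1) (Set.Iic x)).toReal

/-- The `ℓp` norm on `ℝ^d` for `p ∈ [1,∞]` (as an extended real exponent). -/
noncomputable def lpnorm {d : ℕ} (p : ℝ≥0∞) (v : Fin d → ℝ) : ℝ :=
  if p = ∞ then ⨆ i, |v i| else (∑ i, |v i| ^ p.toReal) ^ (1 / p.toReal)

/-- The `ℓp` norm on `ℝ^d` for a real exponent `p ∈ [1,∞)`. -/
noncomputable def lpR {d : ℕ} (p : ℝ) (v : Fin d → ℝ) : ℝ := (∑ i, |v i| ^ p) ^ (1/p)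

section Aux

open Real

lemma gauss_pdf_mul (a b : ℝ) (v w : ℝ≥0) (hv : v ≠ 0) (hw : w ≠ 0) (z x : ℝ) :
    gaussianPDFReal a v x * gaussianPDFReal b w (z - x)
      = gaussianPDFReal (a + b) (v + w) z *
        gaussianPDFReal ((a * w + (z - b) * v) / (v + w))
          ((v * w / (v + w) : ℝ).toNNReal) x := by
  have hV : (0:ℝ) < v := lt_of_le_of_ne (v.coe_nonneg) (by exact_mod_cast (Ne.symm hv))
  have hW : (0:ℝ) < w := lt_of_le_of_ne (w.coe_nonneg) (by exact_mod_cast (Ne.symm hw))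
  have hVW : (0:ℝ) < (v:ℝ) + w := by linarith
  have hv' : (0:ℝ) < (v:ℝ) * w / ((v:ℝ) + w) := by positivity
  have hcoe : (((v * w / (v + w) : ℝ).toNNReal : ℝ)) = (v:ℝ) * w / ((v:ℝ) + w) :=
    Real.coe_toNNReal _ hv'.le
  unfold gaussianPDFReal
  rw [hcoe]
  push_cast
  rw [show ∀ (A B C D : ℝ), A * rexp B * (C * rexp D) = (A * C) * rexp (B + D) by
    intros; rw [Real.exp_add]; ring]
  rw [show ∀ (A B C D : ℝ), A * rexp B * (C * rexp D) = (A * C) * rexp (B + D) by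
    intros; rw [Real.exp_add]; ring]
  congr 1
  · rw [← mul_inv, ← mul_inv, ← Real.sqrt_mul (by positivity), ← Real.sqrt_mul (by positivity)]
    congr 2
    field_simp
  · congr 1
    field_simp
    ring

lemma lintegral_gauss_conv (a b : ℝ) (v w : ℝ≥0) (hv : v ≠ 0) (hw : w ≠ 0) (z : ℝ) :
    ∫⁻ x, gaussianPDF a v x * gaussianPDF b w (z - x) = gaussianPDF (a + b) (v + w) z := by
  have hV : (0:ℝ) < v := lt_of_le_of_ne (v.coe_nonneg) (by exact_mod_cast (Ne.symm hv))
  have hW : (0:ℝ) < w := lt_of_le_of_ne (w.coe_nonneg) (by exact_mod_cast (Ne.symm hw))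
  have hv'' : ((v * w / (v + w) : ℝ)).toNNReal ≠ 0 := by
    refine fun h => absurd (Real.toNNReal_eq_zero.mp h) (not_le.mpr ?_)
    positivity
  simp only [gaussianPDF, ← ENNReal.ofReal_mul (gaussianPDFReal_nonneg a v _)]
  simp_rw [fun x => gauss_pdf_mul a b v w hv hw z x]
  simp_rw [ENNReal.ofReal_mul (gaussianPDFReal_nonneg (a+b) (v+w) z)]
  rw [lintegral_const_mul _ ((measurable_gaussianPDFReal _ _).ennreal_ofReal)]
  rw [lintegral_gaussianPDFReal_eq_one _ hv'', mul_one]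

lemma gaussianReal_conv (a b : ℝ) (v w : ℝ≥0) :
    Measure.map (fun p : ℝ × ℝ => p.1 + p.2) ((gaussianReal a v).prod (gaussianReal b w))
      = gaussianReal (a + b) (v + w) := by
  by_cases hv : v = 0
  · subst hv
    rw [gaussianReal_zero_var, Measure.dirac_prod, Measure.map_map measurable_add (by fun_prop)]
    have : ((fun p : ℝ × ℝ => p.1 + p.2) ∘ fun x : ℝ => (a, x)) = fun x => a + x := rfl
    rw [this, gaussianReal_map_const_add, zero_add, add_comm b a]
  by_cases hw : w = 0
  · subst hw
    rw [gaussianReal_zero_var, Measure.prod_dirac, Measure.map_map measurable_add (by fun_prop)]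
    have : ((fun p : ℝ × ℝ => p.1 + p.2) ∘ fun x : ℝ => (x, b)) = fun x => x + b := rfl
    rw [this, gaussianReal_map_add_const, add_zero]
  have hvw : v + w ≠ 0 := fun h => hv (by simpa using (add_eq_zero.mp h).1)
  refine Measure.ext fun s hs => ?_
  rw [Measure.map_apply measurable_add hs,
    Measure.prod_apply (measurable_add hs)]
  have h1 : ∀ x : ℝ, (gaussianReal b w) (Prod.mk x ⁻¹' ((fun p : ℝ × ℝ => p.1 + p.2) ⁻¹' s))
      = ∫⁻ z, Set.indicator s (fun _ => (1:ℝ≥0∞)) z * gaussianPDF b w (z - x) := by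
    intro x
    have hpre : (Prod.mk x ⁻¹' ((fun p : ℝ × ℝ => p.1 + p.2) ⁻¹' s)) = (fun y => x + y) ⁻¹' s := rfl
    rw [hpre, ← Measure.map_apply (by fun_prop) hs, gaussianReal_map_const_add,
      gaussianReal_of_var_ne_zero _ hw, withDensity_apply _ hs, ← lintegral_indicator hs]
    congr 1
    ext z
    by_cases hz : z ∈ s
    · simp only [Set.indicator_of_mem hz, one_mul, gaussianPDF, gaussianPDFReal_sub]
    · simp [Set.indicator_of_notMem hz]
  simp_rw [h1]
  rw [gaussianReal_of_var_ne_zero a hv,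
    lintegral_withDensity_eq_lintegral_mul _ (measurable_gaussianPDF a v)
      (by
        apply Measurable.lintegral_prod_right
        exact (((measurable_one.indicator hs).comp measurable_snd)).mul
          ((measurable_gaussianPDF b w).comp (measurable_snd.sub measurable_fst)))]
  simp only [Pi.mul_apply]
  have h2 : ∀ x : ℝ, gaussianPDF a v x *
        ∫⁻ z, Set.indicator s (fun _ => (1:ℝ≥0∞)) z * gaussianPDF b w (z - x)
      = ∫⁻ z, Set.indicator s (fun _ => (1:ℝ≥0∞)) z *
          (gaussianPDF a v x * gaussianPDF b w (z - x)) := by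
    intro x
    rw [← lintegral_const_mul' (gaussianPDF a v x)
      (fun z => Set.indicator s (fun _ => (1:ℝ≥0∞)) z * gaussianPDF b w (z - x))
      ENNReal.ofReal_ne_top]
    congr 1; ext z; ring
  simp_rw [h2]
  rw [lintegral_lintegral_swap]
  · have h3 : ∀ z : ℝ, (∫⁻ x, Set.indicator s (fun _ => (1:ℝ≥0∞)) z *
          (gaussianPDF a v x * gaussianPDF b w (z - x)))
        = Set.indicator s (fun _ => (1:ℝ≥0∞)) z * gaussianPDF (a + b) (v + w) z := by
      intro z
      rw [lintegral_const_mul' _ _ (by by_cases hz : z ∈ s <;> simp [hz]),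
        lintegral_gauss_conv a b v w hv hw z]
    simp_rw [h3]
    rw [gaussianReal_of_var_ne_zero _ hvw, withDensity_apply _ hs, ← lintegral_indicator hs]
    congr 1; ext z
    by_cases hz : z ∈ s
    · simp [Set.indicator_of_mem hz]
    · simp [Set.indicator_of_notMem hz]
  · apply Measurable.aemeasurable
    have : Measurable fun q : ℝ × ℝ => Set.indicator s (fun _ => (1:ℝ≥0∞)) q.2 *
        (gaussianPDF a v q.1 * gaussianPDF b w (q.2 - q.1)) :=
      (((measurable_one.indicator hs).comp measurable_snd)).mul
        ((((measurable_gaussianPDF a v).comp measurable_fst)).mul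
          ((measurable_gaussianPDF b w).comp (measurable_snd.sub measurable_fst)))
    exact this

lemma map_sum_gaussPi (d : ℕ) (u m : Fin d → ℝ) (v : ℝ≥0) :
    Measure.map (fun x : Fin d → ℝ => ∑ i, u i * x i)
        (Measure.pi fun i => gaussianReal (m i) v)
      = gaussianReal (∑ i, u i * m i) ((∑ i, (u i)^2 : ℝ).toNNReal * v) := by
  induction d with
  | zero =>
      simp only [Finset.univ_eq_empty, Finset.sum_empty, Real.toNNReal_zero, zero_mul,
        gaussianReal_zero_var]
      rw [Measure.map_const, measure_univ, one_smul]
  | succ n ih =>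
      have hmp := measurePreserving_piFinSuccAbove
        (fun i : Fin (n+1) => gaussianReal (m i) v) 0
      set e := MeasurableEquiv.piFinSuccAbove (fun _ : Fin (n+1) => ℝ) 0 with he
      have hg2 : Measurable fun y : Fin n → ℝ => ∑ j, u (Fin.succ j) * y j :=
        Finset.measurable_sum Finset.univ fun j _ => (measurable_pi_apply j).const_mul _
      have hg : Measurable fun p : ℝ × (Fin n → ℝ) =>
          u 0 * p.1 + ∑ j, u (Fin.succ j) * p.2 j :=
        (measurable_fst.const_mul _).add (hg2.comp measurable_snd)
      have hfe : (fun x : Fin (n+1) → ℝ => ∑ i, u i * x i)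
          = (fun p : ℝ × (Fin n → ℝ) => u 0 * p.1 + ∑ j, u (Fin.succ j) * p.2 j) ∘ e := by
        ext x
        simp [he, MeasurableEquiv.piFinSuccAbove, Fin.sum_univ_succ, Fin.succAbove_zero, Fin.tail]
      rw [hfe, ← Measure.map_map hg e.measurable, hmp.map_eq]
      have hsucc : (fun j : Fin n => gaussianReal (m ((0 : Fin (n+1)).succAbove j)) v)
          = fun j => gaussianReal (m (Fin.succ j)) v := by
        simp [Fin.succAbove_zero]
      rw [hsucc]
      have hcomp : (fun p : ℝ × (Fin n → ℝ) => u 0 * p.1 + ∑ j, u (Fin.succ j) * p.2 j)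
          = (fun q : ℝ × ℝ => q.1 + q.2)
            ∘ Prod.map (fun a => u 0 * a) (fun y : Fin n → ℝ => ∑ j, u (Fin.succ j) * y j) := rfl
      rw [hcomp, ← Measure.map_map measurable_add ((measurable_const_mul _).prodMap hg2),
        ← Measure.map_prod_map _ _ (measurable_const_mul _) hg2,
        gaussianReal_map_const_mul, ih (fun j => u (Fin.succ j)) (fun j => m (Fin.succ j)),
        gaussianReal_conv]
      congr 1
      · rw [Fin.sum_univ_succ]
      · apply NNReal.coe_injective
        push_cast
        rw [Real.coe_toNNReal _ (Finset.sum_nonneg fun i _ => sq_nonneg _),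
          Real.coe_toNNReal _ (Finset.sum_nonneg fun i _ => sq_nonneg _),
          Fin.sum_univ_succ]
        ring

lemma gaussianReal_sigma_eq (m σ : ℝ) (hσ : 0 < σ) :
    gaussianReal m ((σ^2).toNNReal)
      = Measure.map (fun x => σ * x + m) (gaussianReal 0 1) := by
  have h1 : (fun x : ℝ => σ * x + m) = (fun x => x + m) ∘ (fun x => σ * x) := rfl
  rw [h1, ← Measure.map_map (measurable_add_const m) (measurable_const_mul σ),
    gaussianReal_map_const_mul, gaussianReal_map_add_const]
  norm_num
  congr 1
  apply NNReal.coe_injective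
  simp [Real.coe_toNNReal _ (sq_nonneg σ)]

lemma gaussianReal_Iic (m σ t : ℝ) (hσ : 0 < σ) :
    ((gaussianReal m ((σ^2).toNNReal)) (Set.Iic t)).toReal = Phi ((t - m)/σ) := by
  rw [gaussianReal_sigma_eq m σ hσ,
    Measure.map_apply (by fun_prop) measurableSet_Iic]
  have : (fun x : ℝ => σ * x + m) ⁻¹' (Set.Iic t) = Set.Iic ((t - m)/σ) := by
    ext x
    simp only [Set.mem_preimage, Set.mem_Iic, le_div_iff₀ hσ]
    constructor <;> intro h <;> nlinarith
  rw [this]; rfl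

lemma gaussianReal_Ioi (m σ t : ℝ) (hσ : 0 < σ) :
    ((gaussianReal m ((σ^2).toNNReal)) (Set.Ioi t)).toReal = 1 - Phi ((t - m)/σ) := by
  have h := gaussianReal_Iic m σ t hσ
  rw [← Set.compl_Iic, prob_compl_eq_one_sub measurableSet_Iic,
    ENNReal.toReal_sub_of_le prob_le_one ENNReal.one_ne_top, ENNReal.toReal_one, h]

lemma Phi_neg (s : ℝ) : Phi (-s) = 1 - Phi s := by
  haveI : NullSingletonClass (gaussianReal 0 1) :=
    ⟨fun x => (gaussianReal_absolutelyContinuous 0 one_ne_zero) (measure_singleton x)⟩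
  have h1 : gaussianReal 0 1 = Measure.map (fun x : ℝ => -1 * x) (gaussianReal 0 1) := by
    rw [gaussianReal_map_const_mul]
    norm_num
  have h2 : ((gaussianReal 0 1) (Set.Iic (-s))).toReal
      = ((gaussianReal 0 1) (Set.Ici s)).toReal := by
    conv_lhs => rw [h1]
    rw [Measure.map_apply (by fun_prop) measurableSet_Iic]
    congr 2
    ext x
    simp only [Set.mem_preimage, Set.mem_Iic, Set.mem_Ici]
    constructor <;> intro h <;> linarith
  have h3 : (gaussianReal 0 1) (Set.Ici s) = (gaussianReal 0 1) (Set.Ioi s) :=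
    (measure_congr Ioi_ae_eq_Ici).symm
  unfold Phi
  rw [h2, h3, ← Set.compl_Iic, prob_compl_eq_one_sub measurableSet_Iic,
    ENNReal.toReal_sub_of_le prob_le_one ENNReal.one_ne_top, ENNReal.toReal_one]

lemma lpnorm_smul {d : ℕ} (hd : 1 ≤ d) (p : ℝ≥0∞) (hp : 1 ≤ p) (c : ℝ) (u : Fin d → ℝ) :
    lpnorm p (fun i => c * u i) = |c| * lpnorm p u := by
  unfold lpnorm
  split_ifs with h
  · haveI : Nonempty (Fin d) := ⟨⟨0, hd⟩⟩
    simp_rw [abs_mul]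
    exact (Real.mul_iSup_of_nonneg (abs_nonneg c) _).symm
  · have hp0 : p ≠ 0 := fun h0 => by simp [h0] at hp
    have ht : 0 < p.toReal := ENNReal.toReal_pos hp0 h
    simp_rw [abs_mul, Real.mul_rpow (abs_nonneg c) (abs_nonneg _)]
    rw [← Finset.mul_sum,
      Real.mul_rpow (Real.rpow_nonneg (abs_nonneg c) _)
        (Finset.sum_nonneg fun i _ => Real.rpow_nonneg (abs_nonneg _) _),
      ← Real.rpow_mul (abs_nonneg c), mul_one_div_cancel ht.ne', Real.rpow_one]

lemma lpnorm_nonneg {d : ℕ} (p : ℝ≥0∞) (v : Fin d → ℝ) : 0 ≤ lpnorm p v := by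
  unfold lpnorm
  split_ifs with h
  · exact Real.iSup_nonneg fun i => abs_nonneg _
  · exact Real.rpow_nonneg (Finset.sum_nonneg fun i _ => Real.rpow_nonneg (abs_nonneg _) _) _

lemma dotp_add_right {d : ℕ} (u x v : Fin d → ℝ) : dotp u (x + v) = dotp u x + dotp u v := by
  simp [dotp, Pi.add_apply, mul_add, Finset.sum_add_distrib]

lemma dotp_comm {d : ℕ} (u v : Fin d → ℝ) : dotp u v = dotp v u := by
  simp [dotp, mul_comm]

end Aux

/-- the `(ε,δ)`-`ℓp`-strong-adversarial-error rate of the Bayes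
classifier (`w = μ₀`, `b = −μ₀·μ̄`) equals `1 − Φ((‖μ‖₂ − δ)/σ)`. -/
theorem bayes_lp_strong_adversarial_error {d : ℕ} (hd : 1 ≤ d)
    (p : ℝ≥0∞) (hp : 1 ≤ p) (ε δ : ℝ) (hε : 0 < ε) (hδ : 0 ≤ δ)
    (μp μm : Fin d → ℝ) (σ : ℝ) (hσ : 0 < σ)
    (μ μbar μ₀ : Fin d → ℝ)
    (hμ : μ = (1/2 : ℝ) • (μp - μm)) (hμne : μ ≠ 0) (hμ₀ : μ₀ = (l2 μ)⁻¹ • μ)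
    (hμbar : μbar = (1/2 : ℝ) • (μp + μm))
    (w : Fin d → ℝ) (b : ℝ) (hw : w = μ₀) (hb : b = -(dotp μ₀ μbar))
    (hδε : δ * lpnorm p μ₀ ≤ ε) :
    (1/2) * ((gaussPi μp σ) {x : Fin d → ℝ | dotp w x + b ≤ 0 ∨
        ∃ v : Fin d → ℝ, lpnorm p v ≤ ε ∧ |dotp v μ₀| ≤ δ ∧
          dotp w (x + v) + b ≤ 0}).toReal
      + (1/2) * ((gaussPi μm σ) {x : Fin d → ℝ | 0 < dotp w x + b ∨
          ∃ v : Fin d → ℝ, lpnorm p v ≤ ε ∧ |dotp v μ₀| ≤ δ ∧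
            0 < dotp w (x + v) + b}).toReal
      = 1 - Phi ((l2 μ - δ) / σ) := by
  subst hw
  -- basic facts
  have hsum_pos : 0 < ∑ i, (μ i)^2 := by
    obtain ⟨i, hi⟩ := Function.ne_iff.mp hμne
    exact Finset.sum_pos' (fun j _ => sq_nonneg _) ⟨i, Finset.mem_univ i, by have h0 : μ i ≠ 0 := hi; positivity⟩
  have hl2_pos : 0 < l2 μ := Real.sqrt_pos.mpr hsum_pos
  have hl2_sq : (l2 μ)^2 = ∑ i, (μ i)^2 := Real.sq_sqrt hsum_pos.le
  have hwi : ∀ i, w i = (l2 μ)⁻¹ * μ i := fun i => by rw [hμ₀]; rfl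
  have hwsq : ∑ i, (w i)^2 = 1 := by
    simp_rw [hwi, mul_pow, ← Finset.mul_sum, ← hl2_sq]
    field_simp
  have hdotww : dotp w w = 1 := by
    unfold dotp; simp_rw [← sq]; exact hwsq
  have hdotwμ : dotp w μ = l2 μ := by
    unfold dotp
    simp_rw [hwi, mul_assoc, ← Finset.mul_sum, ← sq]
    rw [← hl2_sq]
    field_simp
  -- the adversarial vector
  have hadv : ∀ c : ℝ, |c| ≤ δ →
      lpnorm p (fun i => c * w i) ≤ ε ∧ |dotp (fun i => c * w i) w| ≤ δ ∧
        dotp w (fun i => c * w i) = c := by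
    intro c hc
    have h1 : lpnorm p (fun i => c * w i) = |c| * lpnorm p w := lpnorm_smul hd p hp c w
    have hlp_nonneg : 0 ≤ lpnorm p w := lpnorm_nonneg p w
    refine ⟨?_, ?_, ?_⟩
    · rw [h1]
      calc |c| * lpnorm p w ≤ δ * lpnorm p w := by
            exact mul_le_mul_of_nonneg_right hc hlp_nonneg
        _ ≤ ε := hδε
    · have : dotp (fun i => c * w i) w = c := by
        unfold dotp
        simp_rw [mul_assoc, ← Finset.mul_sum, ← sq, hwsq, mul_one]
      rw [this]; exact hc
    · rw [dotp_comm]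
      unfold dotp
      simp_rw [mul_assoc, ← Finset.mul_sum, ← sq, hwsq, mul_one]
  -- set equalities
  have hS1 : {x : Fin d → ℝ | dotp w x + b ≤ 0 ∨
      ∃ v : Fin d → ℝ, lpnorm p v ≤ ε ∧ |dotp v w| ≤ δ ∧ dotp w (x + v) + b ≤ 0}
      = (fun x : Fin d → ℝ => ∑ i, w i * x i) ⁻¹' Set.Iic (δ - b) := by
    ext x
    simp only [Set.mem_setOf_eq, Set.mem_preimage, Set.mem_Iic]
    have hdx : dotp w x = ∑ i, w i * x i := rfl
    constructor
    · rintro (h | ⟨v, hv1, hv2, hv3⟩)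
      · rw [← hdx]; linarith
      · rw [dotp_add_right] at hv3
        have := (abs_le.mp hv2).1
        rw [dotp_comm w v] at hv3
        rw [← hdx]; linarith
    · intro h
      right
      obtain ⟨ha1, ha2, ha3⟩ := hadv (-δ) (by rw [abs_neg, abs_of_nonneg hδ])
      exact ⟨fun i => -δ * w i, ha1, ha2, by rw [dotp_add_right, ha3, ← hdx] at *; linarith⟩
  have hS2 : {x : Fin d → ℝ | 0 < dotp w x + b ∨
      ∃ v : Fin d → ℝ, lpnorm p v ≤ ε ∧ |dotp v w| ≤ δ ∧ 0 < dotp w (x + v) + b}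
      = (fun x : Fin d → ℝ => ∑ i, w i * x i) ⁻¹' Set.Ioi (-δ - b) := by
    ext x
    simp only [Set.mem_setOf_eq, Set.mem_preimage, Set.mem_Ioi]
    have hdx : dotp w x = ∑ i, w i * x i := rfl
    constructor
    · rintro (h | ⟨v, hv1, hv2, hv3⟩)
      · rw [← hdx]; linarith
      · rw [dotp_add_right] at hv3
        have := (abs_le.mp hv2).2
        rw [dotp_comm w v] at hv3
        rw [← hdx]; linarith
    · intro h
      right
      obtain ⟨ha1, ha2, ha3⟩ := hadv δ (by rw [abs_of_nonneg hδ])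
      exact ⟨fun i => δ * w i, ha1, ha2, by rw [dotp_add_right, ha3, ← hdx] at *; linarith⟩
  -- measurability
  have hmeas : Measurable fun x : Fin d → ℝ => ∑ i, w i * x i :=
    Finset.measurable_sum Finset.univ fun i _ => (measurable_pi_apply i).const_mul _
  -- map computation
  have hmap : ∀ m : Fin d → ℝ,
      Measure.map (fun x : Fin d → ℝ => ∑ i, w i * x i) (gaussPi m σ)
        = gaussianReal (dotp w m) ((σ^2).toNNReal) := by
    intro m
    rw [gaussPi, map_sum_gaussPi d w m ((σ^2).toNNReal), hwsq]
    simp [dotp]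
  -- mean identities
  have hμp_eq : μp = μbar + μ := by
    rw [hμ, hμbar]; ext i
    simp [Pi.add_apply, Pi.smul_apply, Pi.sub_apply]
    ring
  have hμm_eq : μm = μbar - μ := by
    rw [hμ, hμbar]; ext i
    simp [Pi.sub_apply, Pi.smul_apply, Pi.add_apply]
    ring
  have hdotbar : dotp w μbar = -b := by rw [hb]; ring
  have hdotμp : dotp w μp = -b + l2 μ := by
    rw [hμp_eq, dotp_add_right, hdotbar, hdotwμ]
  have hdotμm : dotp w μm = -b - l2 μ := by
    have : μbar = μm + μ := by rw [hμm_eq]; ext i; simp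
    rw [this, dotp_add_right, hdotwμ] at hdotbar
    linarith
  -- compute the two measures
  have hT1 : ((gaussPi μp σ) ((fun x : Fin d → ℝ => ∑ i, w i * x i) ⁻¹' Set.Iic (δ - b))).toReal
      = 1 - Phi ((l2 μ - δ)/σ) := by
    rw [← Measure.map_apply hmeas measurableSet_Iic, hmap, gaussianReal_Iic _ _ _ hσ, hdotμp]
    rw [show (δ - b - (-b + l2 μ))/σ = -((l2 μ - δ)/σ) by ring, Phi_neg]
  have hT2 : ((gaussPi μm σ) ((fun x : Fin d → ℝ => ∑ i, w i * x i) ⁻¹' Set.Ioi (-δ - b))).toReal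
      = 1 - Phi ((l2 μ - δ)/σ) := by
    rw [← Measure.map_apply hmeas measurableSet_Ioi, hmap, gaussianReal_Ioi _ _ _ hσ, hdotμm]
    rw [show (-δ - b - (-b - l2 μ))/σ = (l2 μ - δ)/σ by ring]
  rw [hS1, hS2, hT1, hT2]
  ring
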